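/- Let 𝓒 be the convex hull of all 4×4 matrices (1, x₁, s₁, t₁)ᵀ(1, x₁, s₁, t₁) with x₁ + s₁ + t₁ = 1, x₁ ≥ 0, s₁ ≥ 0, t₁ ∈ {0,1}, and let 𝓓 be the set of 4×4 real symmetric doubly nonnegative matrices W of the form W = [[1, x₁, s₁, t₁], [x₁, X₁₁, Z₁₁, 0], [s₁, Z₁₁, S₁₁, 0], [t₁, 0, 0, t₁]] satisfying x₁ + s₁ + t₁ = 1, X₁₁ + Z₁₁ = x₁, and S₁₁ + Z₁₁ = s₁. Then 𝓒 = 𝓓. -/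

import Mathlib

open Matrix


lemma psd_vmv {n : Type*} [Fintype n] (v : n → ℝ) : (vecMulVec v v).PosSemidef := by
  refine PosSemidef.of_dotProduct_mulVec_nonneg ?_ ?_
  · ext i j
    simp [conjTranspose_apply, vecMulVec_apply, mul_comm]
  · intro x
    have h : vecMulVec v v *ᵥ x = (v ⬝ᵥ x) • v := by
      ext i
      simp only [mulVec, dotProduct, vecMulVec_apply, Pi.smul_apply, smul_eq_mul]
      rw [Finset.sum_mul]
      exact Finset.sum_congr rfl fun j _ => by ring
    have hx : star x = x := by simp
    rw [h, hx, dotProduct_smul, smul_eq_mul, dotProduct_comm]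
    exact mul_self_nonneg _

lemma psd_smul {n : Type*} [Fintype n] {M : Matrix n n ℝ} (hM : M.PosSemidef) {c : ℝ}
    (hc : 0 ≤ c) : (c • M).PosSemidef := by
  refine .of_dotProduct_mulVec_nonneg ?_ (fun x => ?_)
  · rw [IsHermitian, conjTranspose_smul, star_trivial, hM.1]
  · rw [smul_mulVec, dotProduct_smul, smul_eq_mul]
    exact mul_nonneg hc (hM.dotProduct_mulVec_nonneg x)


lemma smul_vmv_E (w : ℝ) : w • vecMulVec ![1,0,0,1] ![1,0,0,1]
    = !![w,0,0,w; 0,0,0,0; 0,0,0,0; w,0,0,w] := by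
  ext i j
  fin_cases i <;> fin_cases j <;>
    simp [vecMulVec_apply, Matrix.vecHead, Matrix.vecTail, -mul_eq_zero, -smul_eq_zero,
      -mul_eq_mul_left_iff, -mul_eq_mul_right_iff] <;>
    first | ring1 | tauto

lemma smul_vmv_M (c w : ℝ) : w • vecMulVec ![1,c,1-c,0] ![1,c,1-c,0]
    = !![w, w*c, w*(1-c), 0;
         w*c, w*(c*c), w*(c*(1-c)), 0;
         w*(1-c), w*(c*(1-c)), w*((1-c)*(1-c)), 0;
         0, 0, 0, 0] := by
  ext i j
  fin_cases i <;> fin_cases j <;>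
    simp [vecMulVec_apply, Matrix.vecHead, Matrix.vecTail, -mul_eq_zero, -smul_eq_zero,
      -mul_eq_mul_left_iff, -mul_eq_mul_right_iff] <;>
    first | ring1 | tauto

lemma smul_vmv_M0 (w : ℝ) : w • vecMulVec ![1,0,1,0] ![1,0,1,0]
    = !![w,0,w,0; 0,0,0,0; w,0,w,0; 0,0,0,0] := by
  ext i j
  fin_cases i <;> fin_cases j <;>
    simp [vecMulVec_apply, Matrix.vecHead, Matrix.vecTail, -mul_eq_zero, -smul_eq_zero,
      -mul_eq_mul_left_iff, -mul_eq_mul_right_iff] <;>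
    first | ring1 | tauto

lemma smul_vmv_M1 (w : ℝ) : w • vecMulVec ![1,1,0,0] ![1,1,0,0]
    = !![w,w,0,0; w,w,0,0; 0,0,0,0; 0,0,0,0] := by
  ext i j
  fin_cases i <;> fin_cases j <;>
    simp [vecMulVec_apply, Matrix.vecHead, Matrix.vecTail, -mul_eq_zero, -smul_eq_zero,
      -mul_eq_mul_left_iff, -mul_eq_mul_right_iff] <;>
    first | ring1 | tauto



private lemma dir1 :
    convexHull ℝ {W : Matrix (Fin 4) (Fin 4) ℝ | ∃ x₁ s₁ t₁ : ℝ,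
        x₁ + s₁ + t₁ = 1 ∧ 0 ≤ x₁ ∧ 0 ≤ s₁ ∧ (t₁ = 0 ∨ t₁ = 1) ∧
        W = Matrix.vecMulVec ![1, x₁, s₁, t₁] ![1, x₁, s₁, t₁]} ⊆
      {W : Matrix (Fin 4) (Fin 4) ℝ | ∃ x₁ s₁ t₁ X₁₁ Z₁₁ S₁₁ : ℝ,
        W = !![1, x₁, s₁, t₁;
               x₁, X₁₁, Z₁₁, 0;
               s₁, Z₁₁, S₁₁, 0;
               t₁, 0, 0, t₁] ∧
        x₁ + s₁ + t₁ = 1 ∧ X₁₁ + Z₁₁ = x₁ ∧ S₁₁ + Z₁₁ = s₁ ∧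
        W.PosSemidef ∧ (∀ i j, 0 ≤ W i j)} := by
  apply convexHull_min
  · rintro W ⟨x, s, t, h1, hx, hs, ht, rfl⟩
    have hxt : x * t = 0 := by
      rcases ht with h | h
      · simp [h]
      · subst h; nlinarith
    have hst : s * t = 0 := by
      rcases ht with h | h
      · simp [h]
      · subst h; nlinarith
    have htt : t * t = t := by rcases ht with h | h <;> subst h <;> ring
    have ht0 : 0 ≤ t := by rcases ht with h | h <;> subst h <;> norm_num
    have hv : ∀ i, 0 ≤ ![1, x, s, t] i := by
      intro i; fin_cases i <;> simp [hx, hs, ht0]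
    refine ⟨x, s, t, x * x, x * s, s * s, ?_, h1, by nlinarith, by nlinarith,
      psd_vmv _, fun i j => mul_nonneg (hv i) (hv j)⟩
    ext i j
    fin_cases i <;> fin_cases j <;>
      simp [vecMulVec_apply, -mul_eq_zero] <;>
      first
        | ring1
        | linear_combination hxt
        | linear_combination hst
        | linear_combination htt
        | linear_combination -htt
  · rintro W ⟨x, s, t, X, Z, S, rfl, h1, h2, h3, hpsd, hnn⟩
      W' ⟨x', s', t', X', Z', S', rfl, h1', h2', h3', hpsd', hnn'⟩ a b ha hb hab
    refine ⟨a * x + b * x', a * s + b * s', a * t + b * t', a * X + b * X',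
      a * Z + b * Z', a * S + b * S', ?_, by linear_combination a * h1 + b * h1' + hab,
      by linear_combination a * h2 + b * h2', by linear_combination a * h3 + b * h3',
      (psd_smul hpsd ha).add (psd_smul hpsd' hb), ?_⟩
    · ext i j
      fin_cases i <;> fin_cases j <;>
        simp [Matrix.add_apply, Matrix.smul_apply, smul_eq_mul] <;>
        first | ring1 | linear_combination hab
    · intro i j
      simp only [Matrix.add_apply, Matrix.smul_apply, smul_eq_mul]
      exact add_nonneg (mul_nonneg ha (hnn i j)) (mul_nonneg hb (hnn' i j))

set_option maxHeartbeats 1000000 in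
private lemma dir2 :
      {W : Matrix (Fin 4) (Fin 4) ℝ | ∃ x₁ s₁ t₁ X₁₁ Z₁₁ S₁₁ : ℝ,
        W = !![1, x₁, s₁, t₁;
               x₁, X₁₁, Z₁₁, 0;
               s₁, Z₁₁, S₁₁, 0;
               t₁, 0, 0, t₁] ∧
        x₁ + s₁ + t₁ = 1 ∧ X₁₁ + Z₁₁ = x₁ ∧ S₁₁ + Z₁₁ = s₁ ∧
        W.PosSemidef ∧ (∀ i j, 0 ≤ W i j)} ⊆
    convexHull ℝ {W : Matrix (Fin 4) (Fin 4) ℝ | ∃ x₁ s₁ t₁ : ℝ,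
        x₁ + s₁ + t₁ = 1 ∧ 0 ≤ x₁ ∧ 0 ≤ s₁ ∧ (t₁ = 0 ∨ t₁ = 1) ∧
        W = Matrix.vecMulVec ![1, x₁, s₁, t₁] ![1, x₁, s₁, t₁]} := by
  rintro W ⟨x, s, t, X, Z, S, hWeq, h1, h2, h3, hpsd, hnn⟩
  set Sgen : Set (Matrix (Fin 4) (Fin 4) ℝ) := {W | ∃ x₁ s₁ t₁ : ℝ,
        x₁ + s₁ + t₁ = 1 ∧ 0 ≤ x₁ ∧ 0 ≤ s₁ ∧ (t₁ = 0 ∨ t₁ = 1) ∧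
        W = Matrix.vecMulVec ![1, x₁, s₁, t₁] ![1, x₁, s₁, t₁]} with hSgen
  have hx : 0 ≤ x := by simpa [hWeq] using hnn 0 1
  have hs : 0 ≤ s := by simpa [hWeq] using hnn 0 2
  have ht : 0 ≤ t := by simpa [hWeq] using hnn 0 3
  have hX : 0 ≤ X := by simpa [hWeq] using hnn 1 1
  have hZ : 0 ≤ Z := by simpa [hWeq] using hnn 1 2
  have hS : 0 ≤ S := by simpa [hWeq] using hnn 2 2
  have hEmem : vecMulVec ![1,0,0,1] ![1,0,0,1] ∈ convexHull ℝ Sgen :=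
    subset_convexHull ℝ Sgen ⟨0, 0, 1, by norm_num, le_rfl, le_rfl, Or.inr rfl, rfl⟩
  have hM0mem : vecMulVec ![1,0,1,0] ![1,0,1,0] ∈ convexHull ℝ Sgen :=
    subset_convexHull ℝ Sgen ⟨0, 1, 0, by norm_num, le_rfl, zero_le_one, Or.inl rfl, by norm_num⟩
  have hM1mem : vecMulVec ![1,1,0,0] ![1,1,0,0] ∈ convexHull ℝ Sgen :=
    subset_convexHull ℝ Sgen ⟨1, 0, 0, by norm_num, zero_le_one, le_rfl, Or.inl rfl, by norm_num⟩
  have hMmem : ∀ c : ℝ, 0 ≤ c → c ≤ 1 →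
      vecMulVec ![1,c,1-c,0] ![1,c,1-c,0] ∈ convexHull ℝ Sgen :=
    fun c h h' => subset_convexHull ℝ Sgen ⟨c, 1-c, 0, by ring, h, by linarith, Or.inl rfl, rfl⟩
  have hXe : X = x - Z := by linarith
  subst hXe
  have hSe : S = s - Z := by linarith
  subst hSe
  have hse : s = 1 - x - t := by linarith
  subst hse
  rcases eq_or_lt_of_le (show t ≤ 1 by linarith) with ht1 | ht1
  · -- t = 1
    subst ht1
    have hx0 : x = 0 := by linarith
    subst hx0
    have hZ0 : Z = 0 := by linarith
    subst hZ0
    have : W = vecMulVec ![1,0,0,1] ![1,0,0,1] := by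
      have h := smul_vmv_E 1
      rw [one_smul] at h
      rw [hWeq, h]
      norm_num
    rw [this]; exact hEmem
  · have hu : (0:ℝ) < 1 - t := by linarith
    rcases eq_or_lt_of_le hx with hx0 | hx0
    · -- x = 0
      obtain rfl : x = 0 := hx0.symm
      have hZ0 : Z = 0 := by linarith
      subst hZ0
      have hcomb : W = t • vecMulVec ![1,0,0,1] ![1,0,0,1]
          + (1 - t) • vecMulVec ![1,0,1,0] ![1,0,1,0] := by
        rw [hWeq, smul_vmv_E, smul_vmv_M0]
        ext i j
        fin_cases i <;> fin_cases j <;>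
          simp [Matrix.add_apply, Matrix.vecHead, Matrix.vecTail, -mul_eq_zero, -smul_eq_zero,
            -mul_eq_mul_left_iff, -mul_eq_mul_right_iff] <;>
          first | ring1 | tauto
      rw [hcomb]
      exact (convex_convexHull ℝ Sgen) hEmem hM0mem ht (le_of_lt hu) (by ring)
    · rcases eq_or_lt_of_le hs with hs0 | hs0
      · -- s = 0, x = 1 - t
        have hZ0 : Z = 0 := by linarith
        subst hZ0
        have hxe : x = 1 - t := by linarith
        subst hxe
        have hcomb : W = t • vecMulVec ![1,0,0,1] ![1,0,0,1]
            + (1 - t) • vecMulVec ![1,1,0,0] ![1,1,0,0] := by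
          rw [hWeq, smul_vmv_E, smul_vmv_M1]
          ext i j
          fin_cases i <;> fin_cases j <;>
            simp [Matrix.add_apply, Matrix.vecHead, Matrix.vecTail, -mul_eq_zero, -smul_eq_zero,
              -mul_eq_mul_left_iff, -mul_eq_mul_right_iff] <;>
            first | ring1 | tauto
        rw [hcomb]
        exact (convex_convexHull ℝ Sgen) hEmem hM1mem ht (le_of_lt hu) (by ring)
      · -- 0 < x, 0 < s
        have hq := hpsd.dotProduct_mulVec_nonneg ![-x, 1-t, 0, x]
        rw [hWeq] at hq
        simp [mulVec, dotProduct, Fin.sum_univ_four] at hq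
        have hkey : x * x ≤ (x - Z) * (1 - t) := by nlinarith [hq, hu]
        have hZu : Z * (1 - t) ≤ x * (1 - x - t) := by nlinarith
        have hxne : x ≠ 0 := ne_of_gt hx0
        have hsne : (1 - x - t) ≠ 0 := ne_of_gt hs0
        have hune : (1 - t) ≠ 0 := ne_of_gt hu
        set a : ℝ := x / (1 - t) with ha_def
        have ha0 : 0 ≤ a := div_nonneg hx (le_of_lt hu)
        have ha1 : a ≤ 1 := by rw [ha_def, div_le_one hu]; linarith
        set w1 : ℝ := Z * (1-t)^2 / (x * (1 - x - t)) with hw1_def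
        set w2 : ℝ := (x * (1 - x - t) - Z * (1-t)) / x with hw2_def
        set w3 : ℝ := (x * (1 - x - t) - Z * (1-t)) / (1 - x - t) with hw3_def
        have hw1 : 0 ≤ w1 := by
          rw [hw1_def]
          exact div_nonneg (mul_nonneg hZ (sq_nonneg _)) (le_of_lt (mul_pos hx0 hs0))
        have hw2 : 0 ≤ w2 := by
          rw [hw2_def]; exact div_nonneg (by linarith) (le_of_lt hx0)
        have hw3 : 0 ≤ w3 := by
          rw [hw3_def]; exact div_nonneg (by linarith) (le_of_lt hs0)
        have hcomb : W = t • vecMulVec ![1,0,0,1] ![1,0,0,1]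
            + w1 • vecMulVec ![1,a,1-a,0] ![1,a,1-a,0]
            + w2 • vecMulVec ![1,0,1,0] ![1,0,1,0]
            + w3 • vecMulVec ![1,1,0,0] ![1,1,0,0] := by
          rw [hWeq, smul_vmv_E, smul_vmv_M, smul_vmv_M0, smul_vmv_M1,
            ha_def, hw1_def, hw2_def, hw3_def]
          ext i j
          fin_cases i <;> fin_cases j <;>
            simp [Matrix.add_apply, Matrix.vecHead, Matrix.vecTail, -mul_eq_zero, -smul_eq_zero,
              -mul_eq_mul_left_iff, -mul_eq_mul_right_iff] <;>
            (field_simp; ring)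
        have hsumw : t + w1 + w2 + w3 = 1 := by
          rw [hw1_def, hw2_def, hw3_def]
          field_simp
          ring
        have hsum : W = ∑ i : Fin 4,
            (![t, w1, w2, w3] i) •
            (![vecMulVec ![1,0,0,1] ![1,0,0,1], vecMulVec ![1,a,1-a,0] ![1,a,1-a,0],
               vecMulVec ![1,0,1,0] ![1,0,1,0], vecMulVec ![1,1,0,0] ![1,1,0,0]] i) := by
          rw [Fin.sum_univ_four]
          simpa using hcomb
        rw [hsum]
        refine (convex_convexHull ℝ Sgen).sum_mem (fun i _ => ?_) ?_ (fun i _ => ?_)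
        · fin_cases i <;> first | exact ht | exact hw1 | exact hw2 | exact hw3
        · rw [Fin.sum_univ_four]
          simpa using hsumw
        · fin_cases i <;>
            first | exact hEmem | exact hMmem a ha0 ha1 | exact hM0mem | exact hM1mem


/-- 𝓒 = 𝓓: the convex hull of the rank-1 matrices (1,x₁,s₁,t₁)ᵀ(1,x₁,s₁,t₁) with
x₁+s₁+t₁ = 1, x₁ ≥ 0, s₁ ≥ 0, t₁ ∈ {0,1}, equals the set of doubly nonnegative
matrices W of the stated form satisfying x₁+s₁+t₁=1, X₁₁+Z₁₁=x₁, S₁₁+Z₁₁=s₁. -/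
theorem stmt1 :
    convexHull ℝ {W : Matrix (Fin 4) (Fin 4) ℝ | ∃ x₁ s₁ t₁ : ℝ,
        x₁ + s₁ + t₁ = 1 ∧ 0 ≤ x₁ ∧ 0 ≤ s₁ ∧ (t₁ = 0 ∨ t₁ = 1) ∧
        W = Matrix.vecMulVec ![1, x₁, s₁, t₁] ![1, x₁, s₁, t₁]} =
      {W : Matrix (Fin 4) (Fin 4) ℝ | ∃ x₁ s₁ t₁ X₁₁ Z₁₁ S₁₁ : ℝ,
        W = !![1, x₁, s₁, t₁;
               x₁, X₁₁, Z₁₁, 0;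
               s₁, Z₁₁, S₁₁, 0;
               t₁, 0, 0, t₁] ∧
        x₁ + s₁ + t₁ = 1 ∧ X₁₁ + Z₁₁ = x₁ ∧ S₁₁ + Z₁₁ = s₁ ∧
        W.PosSemidef ∧ (∀ i j, 0 ≤ W i j)} :=
  Set.Subset.antisymm dir1 dir2
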